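/- Let F be a non-meager P-filter on ω extending the Fréchet filter. Then F, viewed as a topological subspace of the Cantor space 2^ω, is countable dense homogeneous. -/

import Mathlib

open Set

/-- A point of the Cantor space `α → Bool`, viewed as a subset of `α`
(the identification of `2^ω` with `𝒫(ω)` via characteristic functions). -/
def toSet {α : Type*} (x : α → Bool) : Set α := {a | x a = true}

/-- The copy of a family `F ⊆ 𝒫(α)` inside the Cantor space `α → Bool`. -/
def cantorCopy {α : Type*} (F : Set (Set α)) : Set (α → Bool) := toSet ⁻¹' F

/-- `F` is a filter on `α`: contains the whole set, not `∅`, closed under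
finite intersections and supersets. -/
def IsFilterOn {α : Type*} (F : Set (Set α)) : Prop :=
  Set.univ ∈ F ∧ ∅ ∉ F ∧ (∀ A B : Set α, A ∈ F → B ∈ F → A ∩ B ∈ F) ∧
    ∀ A B : Set α, A ∈ F → A ⊆ B → B ∈ F

/-- `F` extends the Fréchet filter: every cofinite set belongs to `F`. -/
def ExtendsFrechet {α : Type*} (F : Set (Set α)) : Prop :=
  ∀ A : Set α, Aᶜ.Finite → A ∈ F

/-- `F` is a P-filter: every countable subfamily has a pseudo-intersection in `F`. -/
def IsPFilterOn {α : Type*} (F : Set (Set α)) : Prop :=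
  ∀ X : ℕ → Set α, (∀ n, X n ∈ F) → ∃ Y ∈ F, ∀ n, (Y \ X n).Finite

/-- `F` is non-meager as a subset of the Cantor space `α → Bool`. -/
def NonMeagerFamily {α : Type*} (F : Set (Set α)) : Prop :=
  ¬ IsMeagre (cantorCopy F)

/-- `I` is an ideal on `α`: contains `∅`, not the whole set, closed under
finite unions and subsets. -/
def IsIdealOn {α : Type*} (I : Set (Set α)) : Prop :=
  ∅ ∈ I ∧ Set.univ ∉ I ∧ (∀ A B : Set α, A ∈ I → B ∈ I → A ∪ B ∈ I) ∧
    ∀ A B : Set α, A ∈ I → B ⊆ A → B ∈ I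

/-- `I` contains all finite sets. -/
def ContainsFinites {α : Type*} (I : Set (Set α)) : Prop :=
  ∀ A : Set α, A.Finite → A ∈ I

/-- `I` is a P-ideal: every countable subfamily has a member of `I`
almost containing each of them. -/
def IsPIdealOn {α : Type*} (I : Set (Set α)) : Prop :=
  ∀ X : ℕ → Set α, (∀ n, X n ∈ I) → ∃ Y ∈ I, ∀ n, (X n \ Y).Finite

/-- A topological space is countable dense homogeneous. -/
def CDH (X : Type*) [TopologicalSpace X] : Prop :=
  ∀ D E : Set X, D.Countable → Dense D → E.Countable → Dense E →
    ∃ h : X ≃ₜ X, h '' D = E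

/-- `D` is a (set-theoretic) subfamily of `F` that is dense in `F` with respect to
the subspace topology `F` inherits from the Cantor space. -/
def DenseIn {α : Type*} (D F : Set (Set α)) : Prop :=
  D ⊆ F ∧ cantorCopy F ⊆ closure (cantorCopy D)

namespace CDHP


/-- agreement strictly below `t` -/
def EqB (x y : ℕ → Bool) (t : ℕ) : Prop := ∀ n, n < t → x n = y n

lemma EqB.rfl {x : ℕ → Bool} {t : ℕ} : EqB x x t := fun _ _ => Eq.refl _

lemma EqB.symm {x y : ℕ → Bool} {t : ℕ} (h : EqB x y t) : EqB y x t :=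
  fun n hn => (h n hn).symm

lemma EqB.trans {x y z : ℕ → Bool} {t : ℕ} (h : EqB x y t) (h' : EqB y z t) : EqB x z t :=
  fun n hn => (h n hn).trans (h' n hn)

lemma EqB.mono {x y : ℕ → Bool} {t t' : ℕ} (h : EqB x y t) (ht : t' ≤ t) : EqB x y t' :=
  fun n hn => h n (lt_of_lt_of_le hn ht)

/-- a function depending only on coordinates below `t` is continuous -/
lemma continuous_of_depBelow (f : (ℕ → Bool) → Bool) (t : ℕ)
    (h : ∀ x y, EqB x y t → f x = f y) : Continuous f := by
  have hfac : f = (fun p : Fin t → Bool => f (fun n => if hn : n < t then p ⟨n, hn⟩ else false)) ∘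
      (fun x (i : Fin t) => x i) := by
    funext x
    exact h _ _ (fun n hn => by simp [hn])
  rw [hfac]
  exact Continuous.comp continuous_of_discreteTopology
    (continuous_pi fun i => continuous_apply _)

/-- the cylinder around z of length t is open -/
lemma isOpen_cyl (z : ℕ → Bool) (t : ℕ) : IsOpen {y : ℕ → Bool | EqB y z t} := by
  have : {y : ℕ → Bool | EqB y z t} = ⋂ n ∈ Finset.range t, {y : ℕ → Bool | y n = z n} := by
    ext y; simp [EqB]
  rw [this]
  refine isOpen_biInter_finset fun n _ => ?_
  have h2 : {y : ℕ → Bool | y n = z n} = (fun y : ℕ → Bool => y n) ⁻¹' ({z n} : Set Bool) := rfl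
  rw [h2]
  exact (isOpen_discrete _).preimage (continuous_apply n)

/-- cylinders are a neighborhood basis -/
lemma exists_cyl_subset {U : Set (ℕ → Bool)} {x : ℕ → Bool} (hU : IsOpen U) (hx : x ∈ U) :
    ∃ t, {y : ℕ → Bool | EqB y x t} ⊆ U := by
  have hmem : U ∈ nhds x := hU.mem_nhds hx
  rw [nhds_pi, Filter.mem_pi] at hmem
  obtain ⟨I, hIfin, V, hV, hsub⟩ := hmem
  obtain ⟨T, hT⟩ := hIfin.bddAbove
  refine ⟨T + 1, fun y hy => hsub fun i hi => ?_⟩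
  have : y i = x i := hy i (Nat.lt_succ_of_le (hT hi))
  rw [this]
  exact mem_of_mem_nhds (hV i)

/-- Talagrand -/
lemma talagrand (F : Set (Set ℕ)) (hNM : NonMeagerFamily F)
    (a : ℕ → ℕ) (ha : StrictMono a) :
    ∃ Z ∈ F, ∀ N, ∃ i, N ≤ i ∧ ∀ n, a i ≤ n → n < a (i+1) → n ∉ Z := by
  by_contra hcon
  push_neg at hcon
  -- every Z ∈ F eventually meets all blocks
  have key : ∀ Z ∈ F, ∃ N, ∀ i, N ≤ i → ∃ n, a i ≤ n ∧ n < a (i+1) ∧ n ∈ Z := by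
    intro Z hZ
    obtain ⟨N, hN⟩ := hcon Z hZ
    exact ⟨N+1, fun i hi => by
      obtain ⟨n, h1, h2, h3⟩ := hN i (by omega)
      exact ⟨n, h1, h2, h3⟩⟩
  set G : ℕ → Set (ℕ → Bool) :=
    fun N => {x | ∀ i, N ≤ i → ∃ n, a i ≤ n ∧ n < a (i+1) ∧ x n = true} with hG
  have hsub : cantorCopy F ⊆ ⋃ N, G N := by
    intro x hx
    obtain ⟨N, hN⟩ := key (toSet x) hx
    exact mem_iUnion.2 ⟨N, fun i hi => hN i hi⟩
  have hclosed : ∀ N, IsClosed (G N) := by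
    intro N
    have : G N = ⋂ i ∈ {i : ℕ | N ≤ i},
        {x : ℕ → Bool | ∃ n, a i ≤ n ∧ n < a (i+1) ∧ x n = true} := by
      ext x; simp [hG]
    rw [this]
    refine isClosed_biInter fun i _ => ?_
    have h2 : {x : ℕ → Bool | ∃ n, a i ≤ n ∧ n < a (i+1) ∧ x n = true} =
        ⋃ n ∈ Finset.Ico (a i) (a (i+1)), {x : ℕ → Bool | x n = true} := by
      ext x; simp; tauto
    rw [h2]
    refine (Finset.Ico (a i) (a (i+1))).finite_toSet.isClosed_biUnion fun n _ => ?_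
    have h3 : {x : ℕ → Bool | x n = true} =
        (fun x : ℕ → Bool => x n) ⁻¹' ({true} : Set Bool) := rfl
    rw [h3]
    exact (isClosed_discrete _).preimage (continuous_apply n)
  have hnwd : ∀ N, IsNowhereDense (G N) := by
    intro N
    rw [(hclosed N).isNowhereDense_iff]
    by_contra hne
    obtain ⟨x, hx⟩ := nonempty_iff_ne_empty.2 hne
    obtain ⟨t, hcyl⟩ := exists_cyl_subset isOpen_interior hx
    set i := max N t with hi
    have hxG : (fun n => if a i ≤ n ∧ n < a (i+1) then false else x n) ∈ G N := by
      apply interior_subset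
      apply hcyl
      intro n hn
      have : ¬ (a i ≤ n ∧ n < a (i+1)) := by
        have := ha.le_apply (x := i)
        omega
      simp [this]
    obtain ⟨n, h1, h2, h3⟩ := hxG i (le_max_left _ _)
    simp only [] at h3
    rw [if_pos ⟨h1, h2⟩] at h3
    exact Bool.false_ne_true h3
  have : IsMeagre (⋃ N, G N) := by
    rw [isMeagre_iff_countable_union_isNowhereDense]
    exact ⟨range G, by rintro t ⟨N, rfl⟩; exact hnwd N, countable_range G, by
      rw [sUnion_range]⟩
  exact hNM (this.mono hsub)

section
variable {F : Set (Set ℕ)} (hF : IsFilterOn F) (hFr : ExtendsFrechet F)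

lemma mem_inter' (hF : IsFilterOn F) {A B : Set ℕ} (hA : A ∈ F) (hB : B ∈ F) : A ∩ B ∈ F :=
  hF.2.2.1 A B hA hB

lemma mem_sup' (hF : IsFilterOn F) {A B : Set ℕ} (hA : A ∈ F) (hAB : A ⊆ B) : B ∈ F :=
  hF.2.2.2 A B hA hAB

/-- tails belong to a Fréchet-extending filter -/
lemma tail_mem (hFr : ExtendsFrechet F) (N : ℕ) : {m : ℕ | N ≤ m} ∈ F := by
  apply hFr
  apply Finite.subset (Finset.range N).finite_toSet
  intro m hm
  simp only [mem_compl_iff, mem_setOf_eq, not_le] at hm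
  simpa using hm

lemma mem_tail_inter (hF : IsFilterOn F) (hFr : ExtendsFrechet F) {A : Set ℕ} (hA : A ∈ F)
    (N : ℕ) : A ∩ {m : ℕ | N ≤ m} ∈ F :=
  mem_inter' hF hA (tail_mem hFr N)

/-- every number lies in an interval of an interval partition -/
lemma exists_interval {j : ℕ → ℕ} (hj : StrictMono j) (hj0 : j 0 = 0) (n : ℕ) :
    ∃ l, j l ≤ n ∧ n < j (l+1) := by
  induction n with
  | zero =>
    refine ⟨0, by omega, ?_⟩
    have h : j 0 < j (0+1) := hj Nat.zero_lt_one
    omega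
  | succ n ih =>
    obtain ⟨l, h1, h2⟩ := ih
    by_cases hc : n + 1 < j (l+1)
    · exact ⟨l, by omega, hc⟩
    · refine ⟨l+1, by omega, ?_⟩
      have h3 : j (l+1) < j (l+1+1) := hj (Nat.lt_succ_self _)
      omega

/-- KMZ-style lemma: pseudo-intersections with interval control. -/
lemma kmz (hF : IsFilterOn F) (hFr : ExtendsFrechet F)
    (hP : IsPFilterOn F) (hNM : NonMeagerFamily F)
    (X : ℕ → Set ℕ) (hX : ∀ n, X n ∈ F) (hmono : ∀ n m, n ≤ m → X m ⊆ X n) :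
    ∃ C ∈ F, ∃ k : ℕ → ℕ, StrictMono k ∧ k 0 = 0 ∧
      ∀ r m, k r ≤ m → m < k (r+1) → m ∈ C → m ∈ X r := by
  obtain ⟨Y, hY, hfin⟩ := hP X hX
  have hbdd : ∀ n, ∃ b, ∀ m ∈ Y \ X n, m ≤ b := fun n => by
    obtain ⟨b, hb⟩ := (hfin n).bddAbove
    exact ⟨b, fun m hm => hb hm⟩
  choose g hg using hbdd
  set G : ℕ → ℕ := fun n => (Finset.range (n+1)).sup g with hGdef
  have hGprop : ∀ i n, i ≤ n → ∀ m ∈ Y \ X i, m ≤ G n := by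
    intro i n hin m hm
    exact le_trans (hg i m hm) (Finset.le_sup (by simp [Nat.lt_succ_of_le hin]))
  set j : ℕ → ℕ := fun m => Nat.rec 0 (fun _ prev => max (prev + 1) (G prev + 1)) m with hjdef
  have hjsucc : ∀ m, j (m+1) = max (j m + 1) (G (j m) + 1) := fun m => rfl
  have hj : StrictMono j := strictMono_nat_of_lt_succ (fun m => by rw [hjsucc]; omega)
  have hj0 : j 0 = 0 := rfl
  obtain ⟨Z, hZ, hTal⟩ := talagrand F hNM j hj
  set μ : ℕ → ℕ := fun r =>
    Nat.rec (Classical.choose (hTal 1)) (fun _ prev => Classical.choose (hTal (prev + 1))) r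
    with hμdef
  have hμ0 : 1 ≤ μ 0 ∧ ∀ n, j (μ 0) ≤ n → n < j (μ 0 + 1) → n ∉ Z :=
    Classical.choose_spec (hTal 1)
  have hμs : ∀ r, μ r + 1 ≤ μ (r+1) ∧
      ∀ n, j (μ (r+1)) ≤ n → n < j (μ (r+1) + 1) → n ∉ Z := fun r =>
    Classical.choose_spec (hTal (μ r + 1))
  have hμmono : StrictMono μ := strictMono_nat_of_lt_succ (fun r => (hμs r).1)
  have hμge : ∀ r, r + 1 ≤ μ r := by
    intro r
    induction r with
    | zero => exact hμ0.1
    | succ r ih => have := (hμs r).1; omega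
  have hμempty : ∀ r, ∀ n, j (μ r) ≤ n → n < j (μ r + 1) → n ∉ Z := by
    intro r
    cases r with
    | zero => exact hμ0.2
    | succ r => exact (hμs r).2
  set k : ℕ → ℕ := fun r => Nat.rec 0 (fun r' _ => j (μ r')) r with hkdef
  have hksucc : ∀ r, k (r+1) = j (μ r) := fun r => rfl
  have hk : StrictMono k := by
    apply strictMono_nat_of_lt_succ
    intro r
    cases r with
    | zero =>
      show (0 : ℕ) < j (μ 0)
      have h1 : j 1 ≤ j (μ 0) := hj.monotone hμ0.1
      have h2 : j 0 < j 1 := hj Nat.zero_lt_one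
      omega
    | succ r =>
      show j (μ r) < j (μ (r+1))
      exact hj (hμmono (Nat.lt_succ_self r))
  refine ⟨Y ∩ Z ∩ {m : ℕ | j (μ 0) ≤ m}, mem_tail_inter hF hFr (mem_inter' hF hY hZ) _,
    k, hk, rfl, ?_⟩
  rintro r m hm1 hm2 ⟨⟨hmY, hmZ⟩, hmT⟩
  cases r with
  | zero =>
    exfalso
    rw [hksucc 0] at hm2
    exact absurd hmT (by simp; omega)
  | succ r =>
    rw [hksucc r] at hm1
    rw [hksucc (r+1)] at hm2
    obtain ⟨l, hl1, hl2⟩ := exists_interval hj hj0 m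
    have hlge : μ r ≤ l := by
      by_contra hcon2
      push_neg at hcon2
      have h5 : j (l+1) ≤ j (μ r) := hj.monotone (Nat.succ_le_of_lt hcon2)
      omega
    rcases eq_or_lt_of_le hlge with heq | hlt
    · exfalso
      exact hμempty r m (heq ▸ hl1) (heq ▸ hl2) hmZ
    · -- l ≥ μ r + 1
      by_contra hnX
      have hmem : m ∈ Y \ X (r+1) := ⟨hmY, hnX⟩
      have hb : m ≤ G (j (μ r)) := by
        apply hGprop (r+1) (j (μ r)) _ m hmem
        have h1 : r + 1 ≤ μ r := hμge r
        have h2 : μ r ≤ j (μ r) := hj.le_apply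
        omega
      have h3 : j (μ r + 1) ≤ j l := hj.monotone hlt
      have h4 : G (j (μ r)) + 1 ≤ j (μ r + 1) := by rw [hjsucc (μ r)]; omega
      omega

end
attribute [local instance] Classical.propDecidable

/-- Ambient data for the back-and-forth construction. -/
structure Amb where
  F : Set (Set ℕ)
  hF : IsFilterOn F
  dE : ℕ → ℕ → Bool
  eE : ℕ → ℕ → Bool
  hdE : ∀ i, dE i ∈ cantorCopy F
  heE : ∀ i, eE i ∈ cantorCopy F
  hDdense : ∀ z ∈ cantorCopy F, ∀ t, ∃ i, EqB (dE i) z t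
  hEdense : ∀ z ∈ cantorCopy F, ∀ t, ∃ i, EqB (eE i) z t
  C : Set ℕ
  hC : C ∈ F
  k : ℕ → ℕ
  hkmono : StrictMono k
  hCk : ∀ i m, k i ≤ m → m ∈ C → dE i m = true ∧ eE i m = true
  ψ : ℕ → ℕ
  hψd : ∀ t i, ∃ m, m ≤ ψ t ∧ EqB (dE m) (dE i) t
  hψe : ∀ t i, ∃ m, m ≤ ψ t ∧ EqB (eE m) (eE i) t
  hS : ∀ B, ∃ t u, B < t ∧ t < u ∧ k (ψ t) ≤ u ∧ ∀ n, t ≤ n → n < u → n ∉ C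

/-- The mirrored ambient data (swap the two dense families). -/
def Amb.mir (A : Amb) : Amb where
  F := A.F
  hF := A.hF
  dE := A.eE
  eE := A.dE
  hdE := A.heE
  heE := A.hdE
  hDdense := A.hEdense
  hEdense := A.hDdense
  C := A.C
  hC := A.hC
  k := A.k
  hkmono := A.hkmono
  hCk := fun i m h1 h2 => (A.hCk i m h1 h2).symm
  ψ := A.ψ
  hψd := A.hψe
  hψe := A.hψd
  hS := A.hS

/-- State of the construction. -/
structure St where
  t : ℕ
  P : (ℕ → Bool) → (ℕ → Bool)
  Q : (ℕ → Bool) → (ℕ → Bool)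
  prs : List ((ℕ → Bool) × (ℕ → Bool))
  dDone : ℕ
  eDone : ℕ

def St.mir (s : St) : St where
  t := s.t
  P := s.Q
  Q := s.P
  prs := s.prs.map Prod.swap
  dDone := s.eDone
  eDone := s.dDone

/-- Invariants of the construction. -/
structure Inv (A : Amb) (s : St) : Prop where
  i1P : ∀ x n, s.t ≤ n → s.P x n = x n
  i1Q : ∀ x n, s.t ≤ n → s.Q x n = x n
  i2P : ∀ x y, EqB x y s.t → EqB (s.P x) (s.P y) s.t
  i2Q : ∀ x y, EqB x y s.t → EqB (s.Q x) (s.Q y) s.t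
  i3QP : ∀ x, s.Q (s.P x) = x
  i3PQ : ∀ x, s.P (s.Q x) = x
  i4P : ∀ x n, n ∈ A.C → s.P x n = x n
  i4Q : ∀ x n, n ∈ A.C → s.Q x n = x n
  i5d : ∀ p ∈ s.prs, ∃ i, A.dE i = p.1
  i5e : ∀ p ∈ s.prs, ∃ i, A.eE i = p.2
  i5tr : ∀ p ∈ s.prs, ∀ n, n ∈ A.C → s.t ≤ n → p.1 n = p.2 n
  i5P : ∀ p ∈ s.prs, EqB (s.P p.1) p.2 s.t
  i5Q : ∀ p ∈ s.prs, EqB (s.Q p.2) p.1 s.t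
  i6x : s.prs.Pairwise (fun p q => ¬ EqB p.1 q.1 s.t)
  i6y : s.prs.Pairwise (fun p q => ¬ EqB p.2 q.2 s.t)
  i7d : ∀ i, i < s.dDone → ∃ p ∈ s.prs, p.1 = A.dE i
  i7e : ∀ i, i < s.eDone → ∃ p ∈ s.prs, p.2 = A.eE i

lemma Inv.mir {A : Amb} {s : St} (h : Inv A s) : Inv A.mir s.mir where
  i1P := h.i1Q
  i1Q := h.i1P
  i2P := h.i2Q
  i2Q := h.i2P
  i3QP := h.i3PQ
  i3PQ := h.i3QP
  i4P := h.i4Q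
  i4Q := h.i4P
  i5d := by rintro p hp; obtain ⟨q, hq, rfl⟩ := List.mem_map.1 hp; exact h.i5e q hq
  i5e := by rintro p hp; obtain ⟨q, hq, rfl⟩ := List.mem_map.1 hp; exact h.i5d q hq
  i5tr := by
    rintro p hp n h1 h2; obtain ⟨q, hq, rfl⟩ := List.mem_map.1 hp
    exact (h.i5tr q hq n h1 h2).symm
  i5P := by rintro p hp; obtain ⟨q, hq, rfl⟩ := List.mem_map.1 hp; exact h.i5Q q hq
  i5Q := by rintro p hp; obtain ⟨q, hq, rfl⟩ := List.mem_map.1 hp; exact h.i5P q hq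
  i6x := by
    show (s.prs.map Prod.swap).Pairwise _
    rw [List.pairwise_map]
    exact h.i6y
  i6y := by
    show (s.prs.map Prod.swap).Pairwise _
    rw [List.pairwise_map]
    exact h.i6x
  i7d := by
    intro i hi
    obtain ⟨p, hp, hp2⟩ := h.i7e i hi
    exact ⟨Prod.swap p, List.mem_map.2 ⟨p, hp, rfl⟩, hp2⟩
  i7e := by
    intro i hi
    obtain ⟨p, hp, hp2⟩ := h.i7d i hi
    exact ⟨Prod.swap p, List.mem_map.2 ⟨p, hp, rfl⟩, hp2⟩

/-! ### block swaps -/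

def blkEq (t t' : ℕ) (u v : ℕ → Bool) : Prop := ∀ m, t ≤ m → m < t' → u m = v m

lemma blkEq.rfl {t t' : ℕ} {u : ℕ → Bool} : blkEq t t' u u := fun _ _ _ => Eq.refl _

lemma blkEq.symm {t t' : ℕ} {u v : ℕ → Bool} (h : blkEq t t' u v) : blkEq t t' v u :=
  fun m h1 h2 => (h m h1 h2).symm

lemma blkEq.trans {t t' : ℕ} {u v w : ℕ → Bool} (h : blkEq t t' u v) (h' : blkEq t t' v w) :
    blkEq t t' u w := fun m h1 h2 => (h m h1 h2).trans (h' m h1 h2)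

noncomputable def blkSw (t t' : ℕ) (p : (ℕ → Bool) × (ℕ → Bool)) (x : ℕ → Bool) : ℕ → Bool :=
  fun n => if blkEq t t' x p.1 then p.2 n else if blkEq t t' x p.2 then p.1 n else x n

lemma blkSw_def (t t' : ℕ) (p : (ℕ → Bool) × (ℕ → Bool)) (x : ℕ → Bool) (n : ℕ) :
    blkSw t t' p x n =
      if blkEq t t' x p.1 then p.2 n else if blkEq t t' x p.2 then p.1 n else x n := rfl

lemma blkSw_congr {t t' : ℕ} {p : (ℕ → Bool) × (ℕ → Bool)} {x x' : ℕ → Bool}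
    (h : blkEq t t' x x') (n : ℕ) (hn1 : t ≤ n) (hn2 : n < t') :
    blkSw t t' p x n = blkSw t t' p x' n := by
  rw [blkSw_def, blkSw_def]
  by_cases h1 : blkEq t t' x p.1
  · rw [if_pos h1, if_pos (h.symm.trans h1)]
  · rw [if_neg h1, if_neg (fun hc => h1 (h.trans hc))]
    by_cases h2 : blkEq t t' x p.2
    · rw [if_pos h2, if_pos (h.symm.trans h2)]
    · rw [if_neg h2, if_neg (fun hc => h2 (h.trans hc))]
      exact h n hn1 hn2

lemma blkSw_eq_of_fst {t t' : ℕ} {p : (ℕ → Bool) × (ℕ → Bool)} {x : ℕ → Bool}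
    (h : blkEq t t' x p.1) : ∀ n, blkSw t t' p x n = p.2 n := by
  intro n; rw [blkSw_def, if_pos h]

lemma blkSw_invol {t t' : ℕ} (p : (ℕ → Bool) × (ℕ → Bool)) (x : ℕ → Bool)
    (n : ℕ) (hn1 : t ≤ n) (hn2 : n < t') :
    blkSw t t' p (blkSw t t' p x) n = x n := by
  by_cases h1 : blkEq t t' x p.1
  · have hb : blkEq t t' (blkSw t t' p x) p.2 := by
      intro m hm1 hm2; rw [blkSw_def, if_pos h1]
    by_cases h2 : blkEq t t' (blkSw t t' p x) p.1
    · rw [blkSw_def, if_pos h2]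
      have h3 : blkEq t t' p.2 p.1 := hb.symm.trans h2
      rw [h3 n hn1 hn2]
      exact (h1 n hn1 hn2).symm
    · rw [blkSw_def, if_neg h2, if_pos hb]
      exact (h1 n hn1 hn2).symm
  · by_cases h2 : blkEq t t' x p.2
    · have hb : blkEq t t' (blkSw t t' p x) p.1 := by
        intro m hm1 hm2; rw [blkSw_def, if_neg h1, if_pos h2]
      rw [blkSw_def, if_pos hb]
      exact (h2 n hn1 hn2).symm
    · have hb : blkEq t t' (blkSw t t' p x) x := by
        intro m hm1 hm2; rw [blkSw_def, if_neg h1, if_neg h2]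
      rw [blkSw_def,
        if_neg (fun hc => h1 (hb.symm.trans hc)), if_neg (fun hc => h2 (hb.symm.trans hc))]
      exact hb n hn1 hn2

lemma blkSw_trace {A : Amb} {s : St} {t' : ℕ} {p : (ℕ → Bool) × (ℕ → Bool)} {x : ℕ → Bool}
    (htr : ∀ n, n ∈ A.C → s.t ≤ n → p.1 n = p.2 n)
    {n : ℕ} (hn : n ∈ A.C) (hn1 : s.t ≤ n) (hn2 : n < t') :
    blkSw s.t t' p x n = x n := by
  rw [blkSw_def]
  by_cases h1 : blkEq s.t t' x p.1
  · rw [if_pos h1, ← htr n hn hn1, h1 n hn1 hn2]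
  · rw [if_neg h1]
    by_cases h2 : blkEq s.t t' x p.2
    · rw [if_pos h2, htr n hn hn1, h2 n hn1 hn2]
    · rw [if_neg h2]

noncomputable def midP (s : St) (t' : ℕ) : (ℕ → Bool) → (ℕ → Bool) := fun x n =>
  if n < s.t then s.P x n
  else if n < t' then
    (if h : ∃ p, p ∈ s.prs ∧ EqB x p.1 s.t then blkSw s.t t' (Classical.choose h) x n else x n)
  else x n

noncomputable def midQ (s : St) (t' : ℕ) : (ℕ → Bool) → (ℕ → Bool) := fun y n =>
  if n < s.t then s.Q y n
  else if n < t' then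
    (if h : ∃ p, p ∈ s.prs ∧ EqB y p.2 s.t then blkSw s.t t' (Classical.choose h) y n else y n)
  else y n

section MID

variable {A : Amb} {s : St} {t' : ℕ}

lemma uniq_x (h : Inv A s) {p q : (ℕ → Bool) × (ℕ → Bool)} (hp : p ∈ s.prs) (hq : q ∈ s.prs)
    (he : EqB p.1 q.1 s.t) : p = q := by
  by_contra hne
  have hsym : Symmetric (fun p q : (ℕ → Bool) × (ℕ → Bool) => ¬ EqB p.1 q.1 s.t) :=
    fun _ _ hab hc => hab hc.symm
  exact (haveI : Std.Symm (fun p q : (ℕ → Bool) × (ℕ → Bool) => ¬ EqB p.1 q.1 s.t) :=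
    ⟨fun a b hab => hsym hab⟩; h.i6x.forall hp hq hne he)

lemma uniq_y (h : Inv A s) {p q : (ℕ → Bool) × (ℕ → Bool)} (hp : p ∈ s.prs) (hq : q ∈ s.prs)
    (he : EqB p.2 q.2 s.t) : p = q := by
  by_contra hne
  have hsym : Symmetric (fun p q : (ℕ → Bool) × (ℕ → Bool) => ¬ EqB p.2 q.2 s.t) :=
    fun _ _ hab hc => hab hc.symm
  exact (haveI : Std.Symm (fun p q : (ℕ → Bool) × (ℕ → Bool) => ¬ EqB p.2 q.2 s.t) :=
    ⟨fun a b hab => hsym hab⟩; h.i6y.forall hp hq hne he)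

lemma midP_lo {x : ℕ → Bool} {n : ℕ} (hn : n < s.t) : midP s t' x n = s.P x n := by
  rw [midP, if_pos hn]

lemma midP_hi (ht' : s.t ≤ t') {x : ℕ → Bool} {n : ℕ} (hn : t' ≤ n) : midP s t' x n = x n := by
  rw [midP, if_neg (by omega), if_neg (by omega)]

lemma midQ_lo {x : ℕ → Bool} {n : ℕ} (hn : n < s.t) : midQ s t' x n = s.Q x n := by
  rw [midQ, if_pos hn]

lemma midQ_hi (ht' : s.t ≤ t') {x : ℕ → Bool} {n : ℕ} (hn : t' ≤ n) : midQ s t' x n = x n := by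
  rw [midQ, if_neg (by omega), if_neg (by omega)]

lemma midP_match (h : Inv A s) {p : (ℕ → Bool) × (ℕ → Bool)} (hp : p ∈ s.prs) {x : ℕ → Bool}
    (hx : EqB x p.1 s.t) {n : ℕ} (hn1 : s.t ≤ n) (hn2 : n < t') :
    midP s t' x n = blkSw s.t t' p x n := by
  have hex : ∃ q, q ∈ s.prs ∧ EqB x q.1 s.t := ⟨p, hp, hx⟩
  rw [midP, if_neg (by omega), if_pos hn2, dif_pos hex]
  obtain ⟨hq1, hq2⟩ := Classical.choose_spec hex
  rw [uniq_x h hq1 hp (hq2.symm.trans hx)]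

lemma midQ_match (h : Inv A s) {p : (ℕ → Bool) × (ℕ → Bool)} (hp : p ∈ s.prs) {y : ℕ → Bool}
    (hy : EqB y p.2 s.t) {n : ℕ} (hn1 : s.t ≤ n) (hn2 : n < t') :
    midQ s t' y n = blkSw s.t t' p y n := by
  have hex : ∃ q, q ∈ s.prs ∧ EqB y q.2 s.t := ⟨p, hp, hy⟩
  rw [midQ, if_neg (by omega), if_pos hn2, dif_pos hex]
  obtain ⟨hq1, hq2⟩ := Classical.choose_spec hex
  rw [uniq_y h hq1 hp (hq2.symm.trans hy)]

lemma midP_nomatch (hx : ¬ ∃ p, p ∈ s.prs ∧ EqB x p.1 s.t) {n : ℕ} (hn1 : s.t ≤ n) :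
    midP s t' x n = x n := by
  rw [midP, if_neg (by omega)]
  by_cases hn2 : n < t'
  · rw [if_pos hn2, dif_neg hx]
  · rw [if_neg hn2]

lemma midQ_nomatch (hy : ¬ ∃ p, p ∈ s.prs ∧ EqB y p.2 s.t) {n : ℕ} (hn1 : s.t ≤ n) :
    midQ s t' y n = y n := by
  rw [midQ, if_neg (by omega)]
  by_cases hn2 : n < t'
  · rw [if_pos hn2, dif_neg hy]
  · rw [if_neg hn2]

lemma midP_eqb (x : ℕ → Bool) : EqB (midP s t' x) (s.P x) s.t :=
  fun _ hn => midP_lo hn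

lemma midQ_eqb (y : ℕ → Bool) : EqB (midQ s t' y) (s.Q y) s.t :=
  fun _ hn => midQ_lo hn

lemma midP_i2 (h : Inv A s) (ht' : s.t < t') :
    ∀ x y, EqB x y t' → EqB (midP s t' x) (midP s t' y) t' := by
  intro x y hxy n hn
  by_cases hn1 : n < s.t
  · rw [midP_lo hn1, midP_lo hn1]
    exact h.i2P x y (hxy.mono (le_of_lt ht')) n hn1
  · push_neg at hn1
    by_cases hex : ∃ p, p ∈ s.prs ∧ EqB x p.1 s.t
    · obtain ⟨p, hp, hxp⟩ := hex
      have hyp : EqB y p.1 s.t := ((hxy.mono (le_of_lt ht')).symm).trans hxp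
      rw [midP_match h hp hxp hn1 hn, midP_match h hp hyp hn1 hn]
      exact blkSw_congr (fun m _ h2 => hxy m h2) n hn1 hn
    · have hey : ¬ ∃ p, p ∈ s.prs ∧ EqB y p.1 s.t := by
        rintro ⟨p, hp, hyp⟩
        exact hex ⟨p, hp, (hxy.mono (le_of_lt ht')).trans hyp⟩
      rw [midP_nomatch hex hn1, midP_nomatch hey hn1]
      exact hxy n hn

lemma midQ_i2 (h : Inv A s) (ht' : s.t < t') :
    ∀ x y, EqB x y t' → EqB (midQ s t' x) (midQ s t' y) t' := by
  intro x y hxy n hn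
  by_cases hn1 : n < s.t
  · rw [midQ_lo hn1, midQ_lo hn1]
    exact h.i2Q x y (hxy.mono (le_of_lt ht')) n hn1
  · push_neg at hn1
    by_cases hex : ∃ p, p ∈ s.prs ∧ EqB x p.2 s.t
    · obtain ⟨p, hp, hxp⟩ := hex
      have hyp : EqB y p.2 s.t := ((hxy.mono (le_of_lt ht')).symm).trans hxp
      rw [midQ_match h hp hxp hn1 hn, midQ_match h hp hyp hn1 hn]
      exact blkSw_congr (fun m _ h2 => hxy m h2) n hn1 hn
    · have hey : ¬ ∃ p, p ∈ s.prs ∧ EqB y p.2 s.t := by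
        rintro ⟨p, hp, hyp⟩
        exact hex ⟨p, hp, (hxy.mono (le_of_lt ht')).trans hyp⟩
      rw [midQ_nomatch hex hn1, midQ_nomatch hey hn1]
      exact hxy n hn

lemma midP_i4 (h : Inv A s) (ht' : s.t < t') :
    ∀ x n, n ∈ A.C → midP s t' x n = x n := by
  intro x n hnC
  by_cases hn1 : n < s.t
  · rw [midP_lo hn1]; exact h.i4P x n hnC
  · push_neg at hn1
    by_cases hn2 : n < t'
    · by_cases hex : ∃ p, p ∈ s.prs ∧ EqB x p.1 s.t
      · obtain ⟨p, hp, hxp⟩ := hex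
        rw [midP_match h hp hxp hn1 hn2]
        exact blkSw_trace (h.i5tr p hp) hnC hn1 hn2
      · rw [midP_nomatch hex hn1]
    · rw [midP_hi (le_of_lt ht') (by omega)]

lemma midQ_i4 (h : Inv A s) (ht' : s.t < t') :
    ∀ x n, n ∈ A.C → midQ s t' x n = x n := by
  intro x n hnC
  by_cases hn1 : n < s.t
  · rw [midQ_lo hn1]; exact h.i4Q x n hnC
  · push_neg at hn1
    by_cases hn2 : n < t'
    · by_cases hex : ∃ p, p ∈ s.prs ∧ EqB x p.2 s.t
      · obtain ⟨p, hp, hxp⟩ := hex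
        rw [midQ_match h hp hxp hn1 hn2]
        exact blkSw_trace (fun n h1 h2 => h.i5tr p hp n h1 h2) hnC hn1 hn2
      · rw [midQ_nomatch hex hn1]
    · rw [midQ_hi (le_of_lt ht') (by omega)]

lemma midQP (h : Inv A s) (ht' : s.t < t') (x : ℕ → Bool) :
    midQ s t' (midP s t' x) = x := by
  funext n
  by_cases hn2 : t' ≤ n
  · rw [midQ_hi (le_of_lt ht') hn2, midP_hi (le_of_lt ht') hn2]
  · push_neg at hn2
    by_cases hn1 : n < s.t
    · rw [midQ_lo hn1]
      have heq : EqB (s.Q (midP s t' x)) (s.Q (s.P x)) s.t := h.i2Q _ _ (midP_eqb x)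
      rw [heq n hn1, h.i3QP x]
    · push_neg at hn1
      by_cases hex : ∃ p, p ∈ s.prs ∧ EqB x p.1 s.t
      · obtain ⟨p, hp, hxp⟩ := hex
        have hmPy : EqB (midP s t' x) p.2 s.t :=
          (midP_eqb x).trans ((h.i2P _ _ hxp).trans (h.i5P p hp))
        rw [midQ_match h hp hmPy hn1 hn2]
        have hblk : blkEq s.t t' (midP s t' x) (blkSw s.t t' p x) :=
          fun m h1 h2 => midP_match h hp hxp h1 h2
        rw [blkSw_congr hblk n hn1 hn2, blkSw_invol p x n hn1 hn2]
      · have hey : ¬ ∃ q, q ∈ s.prs ∧ EqB (midP s t' x) q.2 s.t := by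
          rintro ⟨q, hq, hmq⟩
          apply hex
          refine ⟨q, hq, ?_⟩
          have h1 : EqB (s.P x) q.2 s.t := (midP_eqb x).symm.trans hmq
          have h2 : EqB (s.Q (s.P x)) (s.Q q.2) s.t := h.i2Q _ _ h1
          rw [h.i3QP x] at h2
          exact h2.trans (h.i5Q q hq)
        rw [midQ_nomatch hey hn1, midP_nomatch hex hn1]

lemma midPQ (h : Inv A s) (ht' : s.t < t') (y : ℕ → Bool) :
    midP s t' (midQ s t' y) = y := by
  funext n
  by_cases hn2 : t' ≤ n
  · rw [midP_hi (le_of_lt ht') hn2, midQ_hi (le_of_lt ht') hn2]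
  · push_neg at hn2
    by_cases hn1 : n < s.t
    · rw [midP_lo hn1]
      have heq : EqB (s.P (midQ s t' y)) (s.P (s.Q y)) s.t := h.i2P _ _ (midQ_eqb y)
      rw [heq n hn1, h.i3PQ y]
    · push_neg at hn1
      by_cases hex : ∃ p, p ∈ s.prs ∧ EqB y p.2 s.t
      · obtain ⟨p, hp, hxp⟩ := hex
        have hmPy : EqB (midQ s t' y) p.1 s.t :=
          (midQ_eqb y).trans ((h.i2Q _ _ hxp).trans (h.i5Q p hp))
        rw [midP_match h hp hmPy hn1 hn2]
        have hblk : blkEq s.t t' (midQ s t' y) (blkSw s.t t' p y) :=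
          fun m h1 h2 => midQ_match h hp hxp h1 h2
        rw [blkSw_congr hblk n hn1 hn2, blkSw_invol p y n hn1 hn2]
      · have hey : ¬ ∃ q, q ∈ s.prs ∧ EqB (midQ s t' y) q.1 s.t := by
          rintro ⟨q, hq, hmq⟩
          apply hex
          refine ⟨q, hq, ?_⟩
          have h1 : EqB (s.Q y) q.1 s.t := (midQ_eqb y).symm.trans hmq
          have h2 : EqB (s.P (s.Q y)) (s.P q.1) s.t := h.i2P _ _ h1
          rw [h.i3PQ y] at h2
          exact h2.trans (h.i5P q hq)
        rw [midP_nomatch hey hn1, midQ_nomatch hex hn1]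

lemma midP_pair (h : Inv A s) (ht' : s.t < t') {p : (ℕ → Bool) × (ℕ → Bool)} (hp : p ∈ s.prs) :
    EqB (midP s t' p.1) p.2 t' := by
  intro n hn
  by_cases hn1 : n < s.t
  · rw [midP_lo hn1]; exact h.i5P p hp n hn1
  · push_neg at hn1
    rw [midP_match h hp EqB.rfl hn1 hn]
    exact blkSw_eq_of_fst blkEq.rfl n

lemma midQ_pair (h : Inv A s) (ht' : s.t < t') {p : (ℕ → Bool) × (ℕ → Bool)} (hp : p ∈ s.prs) :
    EqB (midQ s t' p.2) p.1 t' := by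
  intro n hn
  by_cases hn1 : n < s.t
  · rw [midQ_lo hn1]; exact h.i5Q p hp n hn1
  · push_neg at hn1
    rw [midQ_match h hp EqB.rfl hn1 hn, blkSw_def]
    by_cases h1 : blkEq s.t t' p.2 p.1
    · rw [if_pos h1]
      exact h1 n hn1 hn
    · rw [if_neg h1, if_pos blkEq.rfl]

end MID

lemma list_bound {α : Type*} (l : List α) (Q : α → ℕ → Prop)
    (hl : ∀ a ∈ l, ∃ ν, Q a ν) : ∃ B, ∀ a ∈ l, ∃ ν, ν < B ∧ Q a ν := by
  induction l with
  | nil => exact ⟨0, by simp⟩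
  | cons hd tl ih =>
    obtain ⟨B, hB⟩ := ih (fun a ha => hl a (List.mem_cons_of_mem hd ha))
    obtain ⟨ν, hν⟩ := hl hd (List.mem_cons_self (a := hd) (l := tl))
    refine ⟨max B (ν + 1), ?_⟩
    intro a ha
    rcases List.mem_cons.1 ha with rfl | ha
    · exact ⟨ν, by omega, hν⟩
    · obtain ⟨ν', h1, h2⟩ := hB a ha
      exact ⟨ν', by omega, h2⟩

def StepRel (s s' : St) : Prop :=
  s.t < s'.t ∧ (∀ x, EqB (s'.P x) (s.P x) s.t) ∧ (∀ y, EqB (s'.Q y) (s.Q y) s.t) ∧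
  (∀ p ∈ s.prs, p ∈ s'.prs)

lemma stepD (A : Amb) (s : St) (h : Inv A s) :
    ∃ s', Inv A s' ∧ StepRel s s' ∧ s'.dDone = s.dDone + 1 ∧ s'.eDone = s.eDone := by
  classical
  set x := A.dE s.dDone with hxdef
  by_cases hdup : ∃ p ∈ s.prs, p.1 = x
  · -- already committed: just push the cut forward
    obtain ⟨t', u, hB, htu, hku, hCu⟩ := A.hS s.t
    have ht' : s.t < t' := hB
    refine ⟨⟨t', midP s t', midQ s t', s.prs, s.dDone + 1, s.eDone⟩, ?_, ?_, rfl, rfl⟩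
    · exact {
        i1P := fun x n hn => midP_hi (le_of_lt ht') hn
        i1Q := fun x n hn => midQ_hi (le_of_lt ht') hn
        i2P := midP_i2 h ht'
        i2Q := midQ_i2 h ht'
        i3QP := midQP h ht'
        i3PQ := midPQ h ht'
        i4P := midP_i4 h ht'
        i4Q := midQ_i4 h ht'
        i5d := h.i5d
        i5e := h.i5e
        i5tr := fun p hp n h1 h2 => h.i5tr p hp n h1 (le_trans (le_of_lt ht') h2)
        i5P := fun p hp => midP_pair h ht' hp
        i5Q := fun p hp => midQ_pair h ht' hp
        i6x := h.i6x.imp (fun {p q} hpq hc => hpq (hc.mono (le_of_lt ht')))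
        i6y := h.i6y.imp (fun {p q} hpq hc => hpq (hc.mono (le_of_lt ht')))
        i7d := by
          intro i hi
          rcases Nat.lt_succ_iff_lt_or_eq.1 hi with hi | rfl
          · exact h.i7d i hi
          · obtain ⟨p, hp, hp2⟩ := hdup
            exact ⟨p, hp, hp2⟩
        i7e := h.i7e }
    · exact ⟨ht', fun x => midP_eqb x, fun y => midQ_eqb y, fun p hp => hp⟩
  · -- new pair
    have hxne : ∀ p ∈ s.prs, ∃ ν, x ν ≠ p.1 ν := by
      intro p hp
      have : x ≠ p.1 := fun hEq => hdup ⟨p, hp, hEq.symm⟩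
      exact Function.ne_iff.1 (fun hc => this hc.symm) |>.imp (fun ν hν => hν.symm)
    obtain ⟨B0, hB0⟩ := list_bound s.prs (fun p ν => x ν ≠ p.1 ν) hxne
    obtain ⟨t', u, hB, htu, hku, hCu⟩ := A.hS (max (max s.t (A.k s.dDone)) B0)
    have ht' : s.t < t' := by omega
    set P' := midP s t' with hP'def
    set Q' := midQ s t' with hQ'def
    set z : ℕ → Bool := fun n => if n < t' then P' x n else x n with hzdef
    have hzC : ∀ n, n ∈ A.C → z n = x n := by
      intro n hnC
      by_cases hn : n < t'
      · simp only [hzdef, if_pos hn]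
        exact midP_i4 h ht' x n hnC
      · simp only [hzdef, if_neg hn]
    have hz : z ∈ cantorCopy A.F := by
      have hsub : toSet x ∩ A.C ⊆ toSet z := by
        rintro n ⟨hn1, hn2⟩
        show z n = true
        rw [hzC n hn2]
        exact hn1
      exact mem_sup' A.hF (mem_inter' A.hF (A.hdE s.dDone) A.hC) hsub
    obtain ⟨i0, hi0⟩ := A.hEdense z hz t'
    obtain ⟨m, hm, hEqm⟩ := A.hψe t' i0
    set y := A.eE m with hydef
    have hyz : EqB y z t' := hEqm.trans hi0
    have hyP' : EqB y (P' x) t' := by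
      refine hyz.trans (fun n hn => ?_)
      simp only [hzdef, if_pos hn]
    have htrNew : ∀ n, n ∈ A.C → t' ≤ n → x n = y n := by
      intro n hnC hn
      by_cases hu : n < u
      · exact absurd hnC (hCu n hn hu)
      · push_neg at hu
        have hkm : A.k m ≤ n := le_trans (A.hkmono.monotone hm) (le_trans hku hu)
        have hkd : A.k s.dDone ≤ n := by omega
        show A.dE s.dDone n = A.eE m n
        rw [(A.hCk s.dDone n hkd hnC).1, (A.hCk m n hkm hnC).2]
    have hcross : ∀ p ∈ s.prs, ¬ EqB x p.1 t' := by
      intro p hp hEq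
      obtain ⟨ν, hν1, hν2⟩ := hB0 p hp
      exact hν2 (hEq ν (by omega))
    have hcrossy : ∀ p ∈ s.prs, ¬ EqB y p.2 t' := by
      intro p hp hEq
      apply hcross p hp
      have h1 : EqB (Q' y) (Q' p.2) t' := midQ_i2 h ht' _ _ hEq
      have h2 : EqB (Q' y) (Q' (P' x)) t' := midQ_i2 h ht' _ _ hyP'
      have h3 : Q' (P' x) = x := midQP h ht' x
      rw [h3] at h2
      exact (h2.symm.trans h1).trans (midQ_pair h ht' hp)
    refine ⟨⟨t', P', Q', s.prs ++ [(x, y)], s.dDone + 1, s.eDone⟩, ?_, ?_, rfl, rfl⟩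
    · refine {
        i1P := fun x n hn => midP_hi (le_of_lt ht') hn
        i1Q := fun x n hn => midQ_hi (le_of_lt ht') hn
        i2P := midP_i2 h ht'
        i2Q := midQ_i2 h ht'
        i3QP := midQP h ht'
        i3PQ := midPQ h ht'
        i4P := midP_i4 h ht'
        i4Q := midQ_i4 h ht'
        i5d := ?_
        i5e := ?_
        i5tr := ?_
        i5P := ?_
        i5Q := ?_
        i6x := ?_
        i6y := ?_
        i7d := ?_
        i7e := ?_ }
      · -- i5d
        intro p hp
        rcases List.mem_append.1 hp with hp | hp
        · exact h.i5d p hp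
        · rw [List.mem_singleton.1 hp]
          exact ⟨s.dDone, rfl⟩
      · -- i5e
        intro p hp
        rcases List.mem_append.1 hp with hp | hp
        · exact h.i5e p hp
        · rw [List.mem_singleton.1 hp]
          exact ⟨m, rfl⟩
      · -- i5tr
        intro p hp n h1 h2
        rcases List.mem_append.1 hp with hp | hp
        · exact h.i5tr p hp n h1 (le_trans (le_of_lt ht') h2)
        · rw [List.mem_singleton.1 hp]
          exact htrNew n h1 h2
      · -- i5P
        intro p hp
        rcases List.mem_append.1 hp with hp | hp
        · exact midP_pair h ht' hp
        · rw [List.mem_singleton.1 hp]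
          exact hyP'.symm
      · -- i5Q
        intro p hp
        rcases List.mem_append.1 hp with hp | hp
        · exact midQ_pair h ht' hp
        · rw [List.mem_singleton.1 hp]
          show EqB (Q' y) x t'
          have h2 : EqB (Q' y) (Q' (P' x)) t' := midQ_i2 h ht' _ _ hyP'
          have h3 : Q' (P' x) = x := midQP h ht' x
          rw [h3] at h2
          exact h2
      · -- i6x
        rw [List.pairwise_append]
        refine ⟨h.i6x.imp (fun {p q} hpq hc => hpq (hc.mono (le_of_lt ht'))),
          List.pairwise_singleton _ _, ?_⟩
        intro p hp q hq
        rw [List.mem_singleton.1 hq]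
        exact fun hc => hcross p hp hc.symm
      · -- i6y
        rw [List.pairwise_append]
        refine ⟨h.i6y.imp (fun {p q} hpq hc => hpq (hc.mono (le_of_lt ht'))),
          List.pairwise_singleton _ _, ?_⟩
        intro p hp q hq
        rw [List.mem_singleton.1 hq]
        exact fun hc => hcrossy p hp hc.symm
      · -- i7d
        intro i hi
        rcases Nat.lt_succ_iff_lt_or_eq.1 hi with hi | rfl
        · obtain ⟨p, hp, hp2⟩ := h.i7d i hi
          exact ⟨p, List.mem_append.2 (Or.inl hp), hp2⟩
        · exact ⟨(x, y), List.mem_append.2 (Or.inr (List.mem_singleton.2 rfl)), rfl⟩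
      · -- i7e
        intro i hi
        obtain ⟨p, hp, hp2⟩ := h.i7e i hi
        exact ⟨p, List.mem_append.2 (Or.inl hp), hp2⟩
    · exact ⟨ht', fun x => midP_eqb x, fun y => midQ_eqb y,
        fun p hp => List.mem_append.2 (Or.inl hp)⟩

lemma Amb.mir_mir (A : Amb) : A.mir.mir = A := rfl

lemma stepE (A : Amb) (s : St) (h : Inv A s) :
    ∃ s', Inv A s' ∧ StepRel s s' ∧ s'.eDone = s.eDone + 1 ∧ s'.dDone = s.dDone := by
  obtain ⟨s'', h'', hrel, hd, he⟩ := stepD A.mir s.mir h.mir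
  refine ⟨s''.mir, ?_, ?_, ?_, ?_⟩
  · have := h''.mir
    rwa [Amb.mir_mir] at this
  · obtain ⟨h1, h2, h3, h4⟩ := hrel
    refine ⟨h1, h3, h2, ?_⟩
    intro p hp
    have hmem : Prod.swap p ∈ s''.prs := h4 (Prod.swap p) (List.mem_map.2 ⟨p, hp, rfl⟩)
    exact List.mem_map.2 ⟨Prod.swap p, hmem, Prod.swap_swap p⟩
  · exact hd
  · exact he

def initSt : St := ⟨0, id, id, [], 0, 0⟩

lemma initInv (A : Amb) : Inv A initSt where
  i1P := fun _ _ _ => rfl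
  i1Q := fun _ _ _ => rfl
  i2P := fun _ _ h => h
  i2Q := fun _ _ h => h
  i3QP := fun _ => rfl
  i3PQ := fun _ => rfl
  i4P := fun _ _ _ => rfl
  i4Q := fun _ _ _ => rfl
  i5d := fun p hp => absurd hp (List.not_mem_nil (a := p))
  i5e := fun p hp => absurd hp (List.not_mem_nil (a := p))
  i5tr := fun p hp => absurd hp (List.not_mem_nil (a := p))
  i5P := fun p hp => absurd hp (List.not_mem_nil (a := p))
  i5Q := fun p hp => absurd hp (List.not_mem_nil (a := p))
  i6x := List.Pairwise.nil
  i6y := List.Pairwise.nil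
  i7d := fun i hi => absurd hi (Nat.not_lt_zero i)
  i7e := fun i hi => absurd hi (Nat.not_lt_zero i)

noncomputable def seq (A : Amb) : ℕ → {st : St // Inv A st} := fun n =>
  Nat.rec ⟨initSt, initInv A⟩
    (fun n prev =>
      if n % 2 = 0 then
        ⟨(stepD A prev.1 prev.2).choose, (stepD A prev.1 prev.2).choose_spec.1⟩
      else
        ⟨(stepE A prev.1 prev.2).choose, (stepE A prev.1 prev.2).choose_spec.1⟩) n

lemma seq_succ_even (A : Amb) (n : ℕ) (hn : n % 2 = 0) :
    StepRel (seq A n).1 (seq A (n+1)).1 ∧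
      (seq A (n+1)).1.dDone = (seq A n).1.dDone + 1 ∧
      (seq A (n+1)).1.eDone = (seq A n).1.eDone := by
  have hs : seq A (n+1) = if n % 2 = 0 then
        ⟨(stepD A (seq A n).1 (seq A n).2).choose,
          (stepD A (seq A n).1 (seq A n).2).choose_spec.1⟩
      else
        ⟨(stepE A (seq A n).1 (seq A n).2).choose,
          (stepE A (seq A n).1 (seq A n).2).choose_spec.1⟩ := rfl
  rw [if_pos hn] at hs
  rw [hs]
  exact ⟨(stepD A (seq A n).1 (seq A n).2).choose_spec.2.1,
    (stepD A (seq A n).1 (seq A n).2).choose_spec.2.2.1,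
    (stepD A (seq A n).1 (seq A n).2).choose_spec.2.2.2⟩

lemma seq_succ_odd (A : Amb) (n : ℕ) (hn : ¬ n % 2 = 0) :
    StepRel (seq A n).1 (seq A (n+1)).1 ∧
      (seq A (n+1)).1.eDone = (seq A n).1.eDone + 1 ∧
      (seq A (n+1)).1.dDone = (seq A n).1.dDone := by
  have hs : seq A (n+1) = if n % 2 = 0 then
        ⟨(stepD A (seq A n).1 (seq A n).2).choose,
          (stepD A (seq A n).1 (seq A n).2).choose_spec.1⟩
      else
        ⟨(stepE A (seq A n).1 (seq A n).2).choose,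
          (stepE A (seq A n).1 (seq A n).2).choose_spec.1⟩ := rfl
  rw [if_neg hn] at hs
  rw [hs]
  exact ⟨(stepE A (seq A n).1 (seq A n).2).choose_spec.2.1,
    (stepE A (seq A n).1 (seq A n).2).choose_spec.2.2.1,
    (stepE A (seq A n).1 (seq A n).2).choose_spec.2.2.2⟩

lemma seq_step (A : Amb) (n : ℕ) : StepRel (seq A n).1 (seq A (n+1)).1 := by
  by_cases hn : n % 2 = 0
  · exact (seq_succ_even A n hn).1
  · exact (seq_succ_odd A n hn).1

lemma seq_t_mono (A : Amb) : StrictMono (fun n => (seq A n).1.t) :=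
  strictMono_nat_of_lt_succ (fun n => (seq_step A n).1)

lemma seq_t_ge (A : Amb) (n : ℕ) : n ≤ (seq A n).1.t := by
  induction n with
  | zero => exact Nat.zero_le _
  | succ n ih => have := (seq_step A n).1; omega

lemma seq_P_stab (A : Amb) (n m : ℕ) (hnm : n ≤ m) :
    ∀ x, EqB ((seq A m).1.P x) ((seq A n).1.P x) (seq A n).1.t := by
  induction m with
  | zero =>
    intro x
    have : n = 0 := Nat.le_zero.1 hnm
    subst this; exact EqB.rfl
  | succ m ih =>
    intro x
    rcases Nat.le_succ_iff_eq_or_le.1 hnm with rfl | hle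
    · exact EqB.rfl
    · have h1 := (seq_step A m).2.1 x
      have h2 : (seq A n).1.t ≤ (seq A m).1.t := (seq_t_mono A).monotone hle
      exact (h1.mono h2).trans (ih hle x)

lemma seq_Q_stab (A : Amb) (n m : ℕ) (hnm : n ≤ m) :
    ∀ y, EqB ((seq A m).1.Q y) ((seq A n).1.Q y) (seq A n).1.t := by
  induction m with
  | zero =>
    intro y
    have : n = 0 := Nat.le_zero.1 hnm
    subst this; exact EqB.rfl
  | succ m ih =>
    intro y
    rcases Nat.le_succ_iff_eq_or_le.1 hnm with rfl | hle
    · exact EqB.rfl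
    · have h1 := (seq_step A m).2.2.1 y
      have h2 : (seq A n).1.t ≤ (seq A m).1.t := (seq_t_mono A).monotone hle
      exact (h1.mono h2).trans (ih hle y)

lemma seq_prs_stab (A : Amb) (n m : ℕ) (hnm : n ≤ m) :
    ∀ p ∈ (seq A n).1.prs, p ∈ (seq A m).1.prs := by
  induction m with
  | zero =>
    have : n = 0 := Nat.le_zero.1 hnm
    subst this; exact fun p hp => hp
  | succ m ih =>
    rcases Nat.le_succ_iff_eq_or_le.1 hnm with rfl | hle
    · exact fun p hp => hp
    · exact fun p hp => (seq_step A m).2.2.2 p (ih hle p hp)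

lemma seq_done (A : Amb) (i : ℕ) :
    i ≤ (seq A (2*i)).1.dDone ∧ i ≤ (seq A (2*i)).1.eDone := by
  induction i with
  | zero => exact ⟨Nat.zero_le _, Nat.zero_le _⟩
  | succ i ih =>
    have heven := seq_succ_even A (2*i) (by omega)
    have hodd := seq_succ_odd A (2*i+1) (by omega)
    have h1 : 2*(i+1) = (2*i+1)+1 := by omega
    rw [h1]
    obtain ⟨hd1, hd2⟩ := ih
    refine ⟨?_, ?_⟩
    · rw [hodd.2.2, heven.2.1]; omega
    · rw [hodd.2.1, heven.2.2]; omega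

/-- The global forward map. -/
noncomputable def bigH (A : Amb) : (ℕ → Bool) → (ℕ → Bool) := fun x n => (seq A (n+1)).1.P x n

/-- The global backward map. -/
noncomputable def bigG (A : Amb) : (ℕ → Bool) → (ℕ → Bool) := fun y n => (seq A (n+1)).1.Q y n

lemma bigH_eq (A : Amb) (N : ℕ) (x : ℕ → Bool) : EqB (bigH A x) ((seq A N).1.P x) (seq A N).1.t := by
  intro n hn
  show (seq A (n+1)).1.P x n = (seq A N).1.P x n
  rcases le_total (n+1) N with hle | hle
  · exact (seq_P_stab A (n+1) N hle x n
      (lt_of_lt_of_le (Nat.lt_of_lt_of_le (Nat.lt_succ_self n) (seq_t_ge A (n+1))) le_rfl)).symm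
  · exact seq_P_stab A N (n+1) hle x n hn

lemma bigG_eq (A : Amb) (N : ℕ) (y : ℕ → Bool) : EqB (bigG A y) ((seq A N).1.Q y) (seq A N).1.t := by
  intro n hn
  show (seq A (n+1)).1.Q y n = (seq A N).1.Q y n
  rcases le_total (n+1) N with hle | hle
  · exact (seq_Q_stab A (n+1) N hle y n
      (lt_of_lt_of_le (Nat.lt_of_lt_of_le (Nat.lt_succ_self n) (seq_t_ge A (n+1))) le_rfl)).symm
  · exact seq_Q_stab A N (n+1) hle y n hn

lemma bigGH (A : Amb) (x : ℕ → Bool) : bigG A (bigH A x) = x := by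
  funext n
  have hlt : n < (seq A (n+1)).1.t := lt_of_lt_of_le (Nat.lt_succ_self n) (seq_t_ge A (n+1))
  show (seq A (n+1)).1.Q (bigH A x) n = x n
  have h1 : EqB (bigH A x) ((seq A (n+1)).1.P x) (seq A (n+1)).1.t := bigH_eq A (n+1) x
  have h2 := (seq A (n+1)).2.i2Q _ _ h1
  rw [h2 n hlt, (seq A (n+1)).2.i3QP x]

lemma bigHG (A : Amb) (y : ℕ → Bool) : bigH A (bigG A y) = y := by
  funext n
  have hlt : n < (seq A (n+1)).1.t := lt_of_lt_of_le (Nat.lt_succ_self n) (seq_t_ge A (n+1))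
  show (seq A (n+1)).1.P (bigG A y) n = y n
  have h1 : EqB (bigG A y) ((seq A (n+1)).1.Q y) (seq A (n+1)).1.t := bigG_eq A (n+1) y
  have h2 := (seq A (n+1)).2.i2P _ _ h1
  rw [h2 n hlt, (seq A (n+1)).2.i3PQ y]

lemma bigH_trace (A : Amb) (x : ℕ → Bool) (n : ℕ) (hn : n ∈ A.C) : bigH A x n = x n :=
  (seq A (n+1)).2.i4P x n hn

lemma bigG_trace (A : Amb) (y : ℕ → Bool) (n : ℕ) (hn : n ∈ A.C) : bigG A y n = y n :=
  (seq A (n+1)).2.i4Q y n hn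

lemma bigH_cont (A : Amb) : Continuous (bigH A) := by
  apply continuous_pi
  intro n
  apply continuous_of_depBelow _ (seq A (n+1)).1.t
  intro x y hxy
  exact (seq A (n+1)).2.i2P x y hxy n (lt_of_lt_of_le (Nat.lt_succ_self n) (seq_t_ge A (n+1)))

lemma bigG_cont (A : Amb) : Continuous (bigG A) := by
  apply continuous_pi
  intro n
  apply continuous_of_depBelow _ (seq A (n+1)).1.t
  intro x y hxy
  exact (seq A (n+1)).2.i2Q x y hxy n (lt_of_lt_of_le (Nat.lt_succ_self n) (seq_t_ge A (n+1)))

lemma bigH_pair (A : Amb) {p : (ℕ → Bool) × (ℕ → Bool)} {N : ℕ} (hp : p ∈ (seq A N).1.prs) :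
    bigH A p.1 = p.2 := by
  funext n
  set r := max (n+1) N with hr
  have hpr : p ∈ (seq A r).1.prs := seq_prs_stab A N r (le_max_right _ _) p hp
  have h1 : EqB (bigH A p.1) ((seq A r).1.P p.1) (seq A r).1.t := bigH_eq A r p.1
  have hlt : n < (seq A r).1.t :=
    lt_of_lt_of_le (Nat.lt_of_lt_of_le (Nat.lt_succ_self n) (le_max_left _ _)) (seq_t_ge A r)
  rw [h1 n hlt]
  exact (seq A r).2.i5P p hpr n hlt

lemma bigH_dE (A : Amb) (i : ℕ) : ∃ j, bigH A (A.dE i) = A.eE j := by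
  obtain ⟨p, hp, hp1⟩ := (seq A (2*(i+1))).2.i7d i (by have := (seq_done A (i+1)).1; omega)
  obtain ⟨j, hj⟩ := (seq A (2*(i+1))).2.i5e p hp
  exact ⟨j, by rw [← hp1, bigH_pair A hp, ← hj]⟩

lemma bigH_onto_eE (A : Amb) (j : ℕ) : ∃ i, bigH A (A.dE i) = A.eE j := by
  obtain ⟨p, hp, hp2⟩ := (seq A (2*(j+1))).2.i7e j (by have := (seq_done A (j+1)).2; omega)
  obtain ⟨i, hi⟩ := (seq A (2*(j+1))).2.i5d p hp
  exact ⟨i, by rw [hi, bigH_pair A hp, hp2]⟩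

lemma dense_realize {Fam : Set (Set ℕ)} {D : Set ↥(cantorCopy Fam)} (hD : Dense D)
    {z : ℕ → Bool} (hz : z ∈ cantorCopy Fam) (t : ℕ) :
    ∃ d ∈ D, EqB ((d : ↥(cantorCopy Fam)) : ℕ → Bool) z t := by
  have hzc : (⟨z, hz⟩ : ↥(cantorCopy Fam)) ∈ closure D := hD _
  have hop : IsOpen {w : ↥(cantorCopy Fam) | EqB (w : ℕ → Bool) z t} :=
    (isOpen_cyl z t).preimage continuous_subtype_val
  rw [mem_closure_iff] at hzc
  obtain ⟨d, hd1, hd2⟩ := hzc _ hop (fun n _ => rfl)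
  exact ⟨d, hd2, hd1⟩

lemma enum_bound (f : ℕ → (ℕ → Bool)) (t : ℕ) :
    ∃ M, ∀ i, ∃ m, m ≤ M ∧ EqB (f m) (f i) t := by
  classical
  set proj : (ℕ → Bool) → (Fin t → Bool) := fun x i => x i with hproj
  set idx : (Fin t → Bool) → ℕ :=
    fun p => if h : ∃ m, proj (f m) = p then Classical.choose h else 0 with hidx
  refine ⟨(Finset.univ : Finset (Fin t → Bool)).sup idx, fun i => ?_⟩
  have hex : ∃ m, proj (f m) = proj (f i) := ⟨i, rfl⟩
  refine ⟨idx (proj (f i)), ?_, ?_⟩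
  · exact Finset.le_sup (Finset.mem_univ _)
  · have hspec : proj (f (Classical.choose hex)) = proj (f i) := Classical.choose_spec hex
    simp only [hidx, dif_pos hex]
    intro n hn
    exact congrFun hspec ⟨n, hn⟩

end CDHP

open CDHP

/-- A non-meager P-filter on `ω` extending the Fréchet filter, viewed as a subspace
of the Cantor space, is countable dense homogeneous. -/
theorem stmt0 (F : Set (Set ℕ)) (hF : IsFilterOn F) (hFr : ExtendsFrechet F)
    (hP : IsPFilterOn F) (hNM : NonMeagerFamily F) :
    CDH ↥(cantorCopy F) := by
  classical
  intro D E hDc hDd hEc hEd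
  have huniv : ((fun _ => true) : ℕ → Bool) ∈ cantorCopy F := by
    show toSet (fun _ : ℕ => true) ∈ F
    have : toSet (fun _ : ℕ => true) = Set.univ := by ext a; simp [toSet]
    rw [this]; exact hF.1
  haveI : Nonempty ↥(cantorCopy F) := ⟨⟨_, huniv⟩⟩
  have hDne : D.Nonempty := hDd.nonempty
  have hEne : E.Nonempty := hEd.nonempty
  obtain ⟨dE0, hdE0⟩ := (hDc.image Subtype.val).exists_eq_range (hDne.image _)
  obtain ⟨eE0, heE0⟩ := (hEc.image Subtype.val).exists_eq_range (hEne.image _)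
  have hdmem : ∀ i, dE0 i ∈ cantorCopy F := by
    intro i
    have hmem : dE0 i ∈ Subtype.val '' D := by rw [hdE0]; exact mem_range_self i
    obtain ⟨d, _, hd⟩ := hmem
    rw [← hd]; exact d.2
  have hemem : ∀ i, eE0 i ∈ cantorCopy F := by
    intro i
    have hmem : eE0 i ∈ Subtype.val '' E := by rw [heE0]; exact mem_range_self i
    obtain ⟨d, _, hd⟩ := hmem
    rw [← hd]; exact d.2
  have hDdense : ∀ z ∈ cantorCopy F, ∀ t, ∃ i, EqB (dE0 i) z t := by
    intro z hz t
    obtain ⟨d, hdD, hd⟩ := dense_realize hDd hz t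
    have : (d : ℕ → Bool) ∈ Set.range dE0 := by rw [← hdE0]; exact ⟨d, hdD, rfl⟩
    obtain ⟨i, hi⟩ := this
    exact ⟨i, by rw [hi]; exact hd⟩
  have hEdense : ∀ z ∈ cantorCopy F, ∀ t, ∃ i, EqB (eE0 i) z t := by
    intro z hz t
    obtain ⟨d, hdD, hd⟩ := dense_realize hEd hz t
    have : (d : ℕ → Bool) ∈ Set.range eE0 := by rw [← heE0]; exact ⟨d, hdD, rfl⟩
    obtain ⟨i, hi⟩ := this
    exact ⟨i, by rw [hi]; exact hd⟩
  -- the decreasing sequence of members of F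
  set X : ℕ → Set ℕ := fun n => {m | ∀ i, i ≤ n → dE0 i m = true ∧ eE0 i m = true} with hX
  have hXmem : ∀ n, X n ∈ F := by
    intro n
    induction n with
    | zero =>
      have hx0 : X 0 = toSet (dE0 0) ∩ toSet (eE0 0) := by
        ext m
        simp only [hX, mem_setOf_eq, mem_inter_iff, toSet, Nat.le_zero]
        constructor
        · intro hh; exact ⟨(hh 0 rfl).1, (hh 0 rfl).2⟩
        · rintro ⟨h1, h2⟩ i rfl; exact ⟨h1, h2⟩
      rw [hx0]; exact mem_inter' hF (hdmem 0) (hemem 0)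
    | succ n ih =>
      have hxs : X (n+1) = X n ∩ (toSet (dE0 (n+1)) ∩ toSet (eE0 (n+1))) := by
        ext m
        simp only [hX, mem_setOf_eq, mem_inter_iff, toSet]
        constructor
        · intro hh
          exact ⟨fun i hi => hh i (by omega), (hh (n+1) le_rfl).1, (hh (n+1) le_rfl).2⟩
        · rintro ⟨h1, h2, h3⟩ i hi
          by_cases hii : i ≤ n
          · exact h1 i hii
          · have : i = n + 1 := by omega
            subst this; exact ⟨h2, h3⟩
      rw [hxs]; exact mem_inter' hF ih (mem_inter' hF (hdmem _) (hemem _))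
  have hXmono : ∀ n m, n ≤ m → X m ⊆ X n := fun n m hnm x hx i hi => hx i (le_trans hi hnm)
  obtain ⟨C0, hC0, k, hkmono, hk0, hCk'⟩ := kmz hF hFr hP hNM X hXmem hXmono
  have hCk0 : ∀ i m, k i ≤ m → m ∈ C0 → dE0 i m = true ∧ eE0 i m = true := by
    intro i m him hm
    obtain ⟨l, hl1, hl2⟩ := exists_interval hkmono hk0 m
    have hil : i ≤ l := by
      by_contra hcon
      push_neg at hcon
      have : k (l+1) ≤ k i := hkmono.monotone (by omega)
      omega
    exact hCk' l m hl1 hl2 hm i hil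
  choose Md hMd using fun t => enum_bound dE0 t
  choose Me hMe using fun t => enum_bound eE0 t
  set ψ : ℕ → ℕ := fun t => max (Md t) (Me t) with hψ
  set nseq : ℕ → ℕ := fun i => Nat.rec 0 (fun _ prev => max (prev + 1) (ψ (k prev) + 1)) i
    with hnseq
  have hnseqsucc : ∀ i, nseq (i+1) = max (nseq i + 1) (ψ (k (nseq i)) + 1) := fun i => rfl
  have hnseqmono : StrictMono nseq :=
    strictMono_nat_of_lt_succ (fun i => by rw [hnseqsucc]; omega)
  have hamono : StrictMono (fun i => k (nseq i)) := fun i j hij => hkmono (hnseqmono hij)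
  obtain ⟨Z, hZ, hTal⟩ := talagrand F hNM (fun i => k (nseq i)) hamono
  set C : Set ℕ := C0 ∩ Z with hC
  have hCmem : C ∈ F := mem_inter' hF hC0 hZ
  have hS : ∀ B, ∃ t u, B < t ∧ t < u ∧ k (ψ t) ≤ u ∧ ∀ n, t ≤ n → n < u → n ∉ C := by
    intro B
    obtain ⟨i, hiB, hi⟩ := hTal (B+1)
    refine ⟨k (nseq i), k (nseq (i+1)), ?_, hamono (Nat.lt_succ_self i), ?_, ?_⟩
    · have h1 : i ≤ k (nseq i) := hamono.le_apply
      omega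
    · apply hkmono.monotone
      rw [hnseqsucc]
      omega
    · intro n h1 h2 hn
      exact hi n h1 h2 hn.2
  set A : Amb := Amb.mk F hF dE0 eE0 hdmem hemem hDdense hEdense C hCmem k hkmono
    (fun i m h1 h2 => hCk0 i m h1 h2.1) ψ
    (fun t i => (hMd t i).imp (fun m hm => ⟨le_trans hm.1 (le_max_left _ _), hm.2⟩))
    (fun t i => (hMe t i).imp (fun m hm => ⟨le_trans hm.1 (le_max_right _ _), hm.2⟩))
    hS with hA
  have hpresH : ∀ x, x ∈ cantorCopy F → bigH A x ∈ cantorCopy F := by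
    intro x hx
    have hsub : toSet x ∩ C ⊆ toSet (bigH A x) := by
      rintro n ⟨h1, h2⟩
      show bigH A x n = true
      rw [bigH_trace A x n h2]
      exact h1
    exact mem_sup' hF (mem_inter' hF hx hCmem) hsub
  have hpresG : ∀ y, y ∈ cantorCopy F → bigG A y ∈ cantorCopy F := by
    intro y hy
    have hsub : toSet y ∩ C ⊆ toSet (bigG A y) := by
      rintro n ⟨h1, h2⟩
      show bigG A y n = true
      rw [bigG_trace A y n h2]
      exact h1
    exact mem_sup' hF (mem_inter' hF hy hCmem) hsub
  refine ⟨{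
      toFun := fun w => ⟨bigH A w.1, hpresH w.1 w.2⟩
      invFun := fun w => ⟨bigG A w.1, hpresG w.1 w.2⟩
      left_inv := fun w => Subtype.ext (bigGH A w.1)
      right_inv := fun w => Subtype.ext (bigHG A w.1)
      continuous_toFun := Continuous.subtype_mk ((bigH_cont A).comp continuous_subtype_val) _
      continuous_invFun := Continuous.subtype_mk ((bigG_cont A).comp continuous_subtype_val) _
    }, ?_⟩
  apply Set.eq_of_subset_of_subset
  · rintro w ⟨d, hdD, rfl⟩
    have hmem : (d : ℕ → Bool) ∈ Set.range dE0 := by rw [← hdE0]; exact ⟨d, hdD, rfl⟩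
    obtain ⟨i, hi⟩ := hmem
    obtain ⟨j, hj⟩ := bigH_dE A i
    have hmem2 : eE0 j ∈ Subtype.val '' E := by rw [heE0]; exact mem_range_self j
    obtain ⟨e, heE, he⟩ := hmem2
    have hj' : bigH A (dE0 i) = eE0 j := hj
    have heq : (⟨bigH A d.1, hpresH d.1 d.2⟩ : ↥(cantorCopy F)) = e := by
      apply Subtype.ext
      show bigH A (d : ℕ → Bool) = (e : ℕ → Bool)
      rw [← hi, hj', he]
    show (⟨bigH A (d : ℕ → Bool), hpresH d.1 d.2⟩ : ↥(cantorCopy F)) ∈ E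
    rw [heq]
    exact heE
  · intro e heE
    have hmem : (e : ℕ → Bool) ∈ Set.range eE0 := by rw [← heE0]; exact ⟨e, heE, rfl⟩
    obtain ⟨j, hj⟩ := hmem
    obtain ⟨i, hij⟩ := bigH_onto_eE A j
    have hmem2 : dE0 i ∈ Subtype.val '' D := by rw [hdE0]; exact mem_range_self i
    obtain ⟨d, hdD, hd⟩ := hmem2
    refine ⟨d, hdD, ?_⟩
    apply Subtype.ext
    show bigH A (d : ℕ → Bool) = (e : ℕ → Bool)
    have hij' : bigH A (dE0 i) = eE0 j := hij
    rw [hd, hij', hj]
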